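/- Suppose ℓ : 𝒜 → ℝ satisfies σ(α(ℓ(a) − ℓ(b))) = σ(β(Q(a) − Q(b))) for all a, b ∈ 𝒜. Then there exists a constant c ∈ ℝ such that ℓ(a) = c + (β/α)·Q(a) for every a ∈ 𝒜. If in addition Σ_a e^{ℓ(a)} = 1, then e^{ℓ(a)} = exp((β/α)·Q(a)) / Σ_{a'} exp((β/α)·Q(a')) for every a ∈ 𝒜. -/

import Mathlib

open Finset

/-- The logistic (sigmoid) function σ(z) = 1/(1+e^{-z}). -/
noncomputable def sigmoid (z : ℝ) : ℝ := 1 / (1 + Real.exp (-z))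

lemma sigmoid_inj : Function.Injective sigmoid := by
  intro x y h
  unfold sigmoid at h
  have hx : (0:ℝ) < 1 + Real.exp (-x) := by positivity
  have hy : (0:ℝ) < 1 + Real.exp (-y) := by positivity
  field_simp at h
  have h2 := Real.exp_injective (add_left_cancel h.symm)
  linarith

/-- if σ(α(ℓ a − ℓ b)) = σ(β(Q a − Q b)) for all a, b, then
ℓ = c + (β/α)·Q for some constant c; if moreover Σ_a e^{ℓ(a)} = 1, then
e^{ℓ(a)} is the Gibbs distribution with logits (β/α)·Q. -/
theorem stmt_8 {A : Type*} [Fintype A] [Nonempty A]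
    (Q : A → ℝ) (α β : ℝ) (hα : 0 < α) (hβ : 0 < β) (ℓ : A → ℝ)
    (hmatch : ∀ a b : A, sigmoid (α * (ℓ a - ℓ b)) = sigmoid (β * (Q a - Q b))) :
    (∃ c : ℝ, ∀ a : A, ℓ a = c + (β / α) * Q a) ∧
    ((∑ a : A, Real.exp (ℓ a)) = 1 →
      ∀ a : A, Real.exp (ℓ a) =
        Real.exp ((β / α) * Q a) / ∑ a' : A, Real.exp ((β / α) * Q a')) := by
  have key : ∀ a b : A, α * (ℓ a - ℓ b) = β * (Q a - Q b) := fun a b =>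
    sigmoid_inj (hmatch a b)
  obtain ⟨a0⟩ := ‹Nonempty A›
  have hc : ∀ a : A, ℓ a = (ℓ a0 - (β / α) * Q a0) + (β / α) * Q a := by
    intro a
    have := key a a0
    field_simp
    nlinarith [this]
  refine ⟨⟨ℓ a0 - (β / α) * Q a0, hc⟩, ?_⟩
  intro hsum a
  set c := ℓ a0 - (β / α) * Q a0
  have hS : ∑ a' : A, Real.exp ((β / α) * Q a')
      = Real.exp (-c) * ∑ a : A, Real.exp (ℓ a) := by
    rw [Finset.mul_sum]
    refine Finset.sum_congr rfl fun x _ => ?_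
    rw [hc x, ← Real.exp_add]; ring_nf
  rw [hS, hsum, mul_one, hc a, Real.exp_add]
  rw [Real.exp_neg]
  field_simp
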